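/- Let X be a locally finite CAT(0) cube complex with no infinite collection of pairwise-crossing hyperplanes, and let γ be a combinatorial geodesic ray. Then there exists a combinatorial geodesic ray γ₀ with γ₀(0) = γ(0), W(γ₀) ⊆ W(γ), such that [γ₀] is minimal: any geodesic ray β with W(β) \ W(γ₀) finite satisfies W(γ₀) \ W(β) finite as well. -/

import Mathlib

/-- The set of walls separating `u` from `v` (hyperplanes via halfspace
indicator `side`). -/
def sepSet {V W : Type*} (side : W → V → Bool) (u v : V) : Set W :=
  {w | side w u ≠ side w v}

/-- `γ : ℕ → V` is a combinatorial geodesic ray in `Γ`. -/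
def IsGeodesicRay {V : Type*} (Γ : SimpleGraph V) (γ : ℕ → V) : Prop :=
  (∀ t : ℕ, Γ.Adj (γ t) (γ (t + 1))) ∧ ∀ s t : ℕ, s ≤ t → Γ.dist (γ s) (γ t) = t - s

/-- The set of hyperplanes crossed by the ray `γ`. -/
def raysWalls {V W : Type*} (side : W → V → Bool) (γ : ℕ → V) : Set W :=
  {w | ∃ t : ℕ, side w (γ t) ≠ side w (γ (t + 1))}

/-- Two hyperplanes cross: all four quarterspaces are nonempty. -/
def WallsCross {V W : Type*} (side : W → V → Bool) (w₁ w₂ : W) : Prop :=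
  ∀ b₁ b₂ : Bool, ∃ v : V, side w₁ v = b₁ ∧ side w₂ v = b₂

/-- `m` is a median of `x`, `y`, `z`. -/
def IsMedianPt {V : Type*} (Γ : SimpleGraph V) (x y z m : V) : Prop :=
  Γ.dist x m + Γ.dist m y = Γ.dist x y ∧
    Γ.dist x m + Γ.dist m z = Γ.dist x z ∧
    Γ.dist y m + Γ.dist m z = Γ.dist y z

/-- A median graph: any three vertices have a unique median. -/
def IsMedianGraph {V : Type*} (Γ : SimpleGraph V) : Prop :=
  ∀ x y z : V, ∃! m : V, IsMedianPt Γ x y z m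

namespace MinRay

set_option linter.unusedSectionVars false
attribute [local instance] Classical.propDecidable

open Classical

variable {V W : Type*}

section Sep

variable (side : W → V → Bool)

lemma mem_sep {w : W} {u v : V} : w ∈ sepSet side u v ↔ side w u ≠ side w v := Iff.rfl

lemma sep_comm (u v : V) : sepSet side u v = sepSet side v u := by
  ext w; simp [mem_sep, ne_comm]

lemma sep_self (u : V) : sepSet side u u = ∅ := by
  ext w; simp [mem_sep]

lemma sep_subset_union (x z y : V) :
    sepSet side x y ⊆ sepSet side x z ∪ sepSet side z y := by
  intro w hw
  by_cases h : side w x = side w z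
  · right; intro h2; exact hw (h.trans h2)
  · left; exact h

variable {Γ : SimpleGraph V}
variable (hfin : ∀ u v : V, (sepSet side u v).Finite)
  (hdist : ∀ u v : V, Γ.dist u v = (sepSet side u v).ncard)

include hfin hdist in
lemma sep_split {x z y : V} (h : Γ.dist x z + Γ.dist z y = Γ.dist x y) :
    sepSet side x y = sepSet side x z ∪ sepSet side z y ∧
      Disjoint (sepSet side x z) (sepSet side z y) := by
  have hsub := sep_subset_union side x z y
  have hunion := Set.ncard_union_add_ncard_inter (sepSet side x z) (sepSet side z y)
    (hfin x z) (hfin z y)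
  have hle : (sepSet side x y).ncard ≤ (sepSet side x z ∪ sepSet side z y).ncard :=
    Set.ncard_le_ncard hsub ((hfin x z).union (hfin z y))
  rw [hdist, hdist, hdist] at h
  have hinter : (sepSet side x z ∩ sepSet side z y).ncard = 0 := by omega
  have hinterempty : sepSet side x z ∩ sepSet side z y = ∅ := by
    have : (sepSet side x z ∩ sepSet side z y).Finite := (hfin x z).inter_of_left _
    rwa [Set.ncard_eq_zero this] at hinter
  have hdisj : Disjoint (sepSet side x z) (sepSet side z y) :=
    Set.disjoint_iff_inter_eq_empty.mpr hinterempty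
  constructor
  · apply Set.Subset.antisymm hsub
    rintro w (hw | hw)
    · by_contra hxy
      have : side w x = side w y := not_not.mp hxy
      have hw2 : w ∈ sepSet side z y := by
        rw [mem_sep]; rw [mem_sep] at hw
        intro h2; exact hw (by rw [this, ← h2])
      exact (Set.disjoint_left.mp hdisj hw) hw2
    · by_contra hxy
      have : side w x = side w y := not_not.mp hxy
      have hw2 : w ∈ sepSet side x z := by
        rw [mem_sep]; rw [mem_sep] at hw
        intro h2; exact hw (by rw [← h2, this])
      exact (Set.disjoint_left.mp hdisj hw2) hw
  · exact hdisj

include hfin hdist in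
lemma sep_left_subset {x z y : V} (h : Γ.dist x z + Γ.dist z y = Γ.dist x y) :
    sepSet side x z ⊆ sepSet side x y := by
  obtain ⟨he, hd⟩ := sep_split side hfin hdist h
  intro w hw
  by_contra hxy
  have : side w x = side w y := not_not.mp hxy
  have hw2 : w ∈ sepSet side z y := by
    rw [mem_sep] at hw ⊢
    intro h2; exact hw (by rw [this, ← h2])
  exact (Set.disjoint_left.mp hd hw) hw2

include hfin hdist in
lemma sep_right_subset {x z y : V} (h : Γ.dist x z + Γ.dist z y = Γ.dist x y) :
    sepSet side z y ⊆ sepSet side x y := by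
  obtain ⟨he, _⟩ := sep_split side hfin hdist h
  intro w hw; rw [he]; exact Or.inr hw

end Sep



section Ray

lemma bool_ne_iff {a b : Bool} : a ≠ b ↔ a = !b := by cases a <;> cases b <;> simp

variable (side : W → V → Bool) {Γ : SimpleGraph V}
variable (hfin : ∀ u v : V, (sepSet side u v).Finite)
  (hdist : ∀ u v : V, Γ.dist u v = (sepSet side u v).ncard)
variable {ρ : ℕ → V} (hρ : IsGeodesicRay Γ ρ)

include hρ in
lemma ray_between {s t u : ℕ} (hst : s ≤ t) (htu : t ≤ u) :
    Γ.dist (ρ s) (ρ t) + Γ.dist (ρ t) (ρ u) = Γ.dist (ρ s) (ρ u) := by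
  rw [hρ.2 s t hst, hρ.2 t u htu, hρ.2 s u (hst.trans htu)]; omega

include hdist hρ in
lemma ray_sep_ncard {s t : ℕ} (h : s ≤ t) :
    (sepSet side (ρ s) (ρ t)).ncard = t - s := by
  rw [← hdist, hρ.2 s t h]

include hfin hdist hρ in
lemma ray_sep_left {s t u : ℕ} (hst : s ≤ t) (htu : t ≤ u) :
    sepSet side (ρ s) (ρ t) ⊆ sepSet side (ρ s) (ρ u) :=
  sep_left_subset side hfin hdist (ray_between hρ hst htu)

include hfin hdist hρ in
lemma ray_sep_right {s t u : ℕ} (hst : s ≤ t) (htu : t ≤ u) :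
    sepSet side (ρ t) (ρ u) ⊆ sepSet side (ρ s) (ρ u) :=
  sep_right_subset side hfin hdist (ray_between hρ hst htu)

include hfin hdist hρ in
lemma ray_sep_disj {s t u : ℕ} (hst : s ≤ t) (htu : t ≤ u) :
    Disjoint (sepSet side (ρ s) (ρ t)) (sepSet side (ρ t) (ρ u)) :=
  (sep_split side hfin hdist (ray_between hρ hst htu)).2

lemma ray_mem_of_sep {w : W} {s t : ℕ} (h : side w (ρ s) ≠ side w (ρ t)) :
    w ∈ raysWalls side ρ := by
  by_contra hw
  have hconst : ∀ u : ℕ, side w (ρ u) = side w (ρ 0) := by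
    intro u
    induction u with
    | zero => rfl
    | succ n ih =>
      by_contra hne
      exact hw ⟨n, by rw [ih]; intro h2; exact hne h2.symm⟩
  exact h ((hconst s).trans (hconst t).symm)

include hfin hdist hρ in
lemma ray_walls_infinite : (raysWalls side ρ).Infinite := by
  intro hfin'
  set c := (raysWalls side ρ).ncard with hc
  have h1 : (sepSet side (ρ 0) (ρ (c + 1))).ncard = c + 1 := by
    rw [ray_sep_ncard side hdist hρ (Nat.zero_le _)]; omega
  have h2 : sepSet side (ρ 0) (ρ (c + 1)) ⊆ raysWalls side ρ := by
    intro w hw; exact ray_mem_of_sep side hw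
  have := Set.ncard_le_ncard h2 hfin'
  omega

/-- Crossing time of a wall on a ray. -/
noncomputable def crossT (ρ : ℕ → V) (w : W) : ℕ :=
  if h : w ∈ raysWalls side ρ then Nat.find h else 0

lemma crossT_spec {w : W} (h : w ∈ raysWalls side ρ) :
    side w (ρ (crossT side ρ w)) ≠ side w (ρ (crossT side ρ w + 1)) := by
  rw [crossT, dif_pos h]; exact Nat.find_spec h

lemma crossT_min {w : W} (h : w ∈ raysWalls side ρ) {t : ℕ} (ht : t < crossT side ρ w) :
    side w (ρ t) = side w (ρ (t + 1)) := by
  rw [crossT, dif_pos h] at ht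
  have := Nat.find_min h ht
  exact not_not.mp this

lemma ray_side_before {w : W} (h : w ∈ raysWalls side ρ) {t : ℕ}
    (ht : t ≤ crossT side ρ w) : side w (ρ t) = side w (ρ 0) := by
  induction t with
  | zero => rfl
  | succ n ih =>
    have h1 : n < crossT side ρ w := ht
    rw [← crossT_min side h h1]
    exact ih (Nat.le_of_lt h1)

include hfin hdist hρ in
lemma ray_side_after {w : W} (h : w ∈ raysWalls side ρ) {t : ℕ}
    (ht : crossT side ρ w < t) : side w (ρ t) = !(side w (ρ 0)) := by
  set τ := crossT side ρ w with hτ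
  have hstep : side w (ρ (τ + 1)) = !(side w (ρ 0)) := by
    have h1 := crossT_spec side h
    have h2 : side w (ρ τ) = side w (ρ 0) := ray_side_before side h le_rfl
    rw [h2] at h1
    rw [bool_ne_iff] at h1
    cases hb : side w (ρ 0) <;> simp [hb] at h1 ⊢ <;> (try simp [h1]) <;> exact h1
  induction t with
  | zero => omega
  | succ n ih =>
    rcases Nat.lt_or_ge τ n with hn | hn
    · have hn' := ih hn
      by_contra hne
      have hsep1 : w ∈ sepSet side (ρ τ) (ρ (τ + 1)) := crossT_spec side h
      have hsep2 : w ∈ sepSet side (ρ n) (ρ (n + 1)) := by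
        rw [mem_sep]
        intro h2; rw [h2] at hn'; exact hne hn'
      have hsub : sepSet side (ρ n) (ρ (n + 1)) ⊆ sepSet side (ρ (τ + 1)) (ρ (n + 1)) :=
        ray_sep_right side hfin hdist hρ hn (Nat.le_succ n)
      have hdisj := ray_sep_disj side hfin hdist hρ (Nat.le_succ τ)
        (show τ + 1 ≤ n + 1 by omega)
      exact Set.disjoint_left.mp hdisj hsep1 (hsub hsep2)
    · have : n = τ := by omega
      rw [this]; exact hstep

include hfin hdist hρ in
lemma ray_mem_sep0_iff {w : W} (h : w ∈ raysWalls side ρ) {t : ℕ} :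
    w ∈ sepSet side (ρ 0) (ρ t) ↔ crossT side ρ w < t := by
  constructor
  · intro hw
    by_contra hle
    push_neg at hle
    have := ray_side_before side h hle
    rw [mem_sep] at hw
    exact hw (this.symm)
  · intro hlt
    rw [mem_sep]
    have := ray_side_after side hfin hdist hρ h hlt
    rw [this]
    cases side w (ρ 0) <;> simp

include hdist hρ in
lemma crossT_inj {w₁ w₂ : W} (h₁ : w₁ ∈ raysWalls side ρ) (h₂ : w₂ ∈ raysWalls side ρ)
    (he : crossT side ρ w₁ = crossT side ρ w₂) : w₁ = w₂ := by
  set τ := crossT side ρ w₁ with hτ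
  have hc : (sepSet side (ρ τ) (ρ (τ + 1))).ncard = 1 := by
    rw [ray_sep_ncard side hdist hρ (Nat.le_succ τ)]; omega
  obtain ⟨a, ha⟩ := Set.ncard_eq_one.mp hc
  have m1 : w₁ ∈ sepSet side (ρ τ) (ρ (τ + 1)) := crossT_spec side h₁
  have m2 : w₂ ∈ sepSet side (ρ τ) (ρ (τ + 1)) := by
    have := crossT_spec side h₂
    rw [← he] at this; exact this
  rw [ha] at m1 m2
  rw [Set.mem_singleton_iff] at m1 m2
  rw [m1, m2]

include hfin hdist hρ in
lemma crossT_le_finite (N : ℕ) :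
    {w : W | w ∈ raysWalls side ρ ∧ crossT side ρ w ≤ N}.Finite := by
  apply (hfin (ρ 0) (ρ (N + 1))).subset
  rintro w ⟨hw, hle⟩
  exact (ray_mem_sep0_iff side hfin hdist hρ hw).mpr (by omega)

lemma ray_sep0_subset_walls (t : ℕ) :
    sepSet side (ρ 0) (ρ t) ⊆ raysWalls side ρ := fun _ hw => ray_mem_of_sep side hw

end Ray



section Gate

variable {Γ : SimpleGraph V}

/-- A set closed under metric betweenness. -/
def ConvexS (Γ : SimpleGraph V) (K : Set V) : Prop :=
  ∀ x ∈ K, ∀ y ∈ K, ∀ z : V, Γ.dist x z + Γ.dist z y = Γ.dist x y → z ∈ K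

variable (side : W → V → Bool)
variable (hfin : ∀ u v : V, (sepSet side u v).Finite)
  (hdist : ∀ u v : V, Γ.dist u v = (sepSet side u v).ncard)

include hfin hdist in
lemma halfspace_convex (w : W) (b : Bool) : ConvexS Γ {v : V | side w v = b} := by
  intro x hx y hy z hz
  by_contra hzb
  have hd := (sep_split side hfin hdist hz).2
  have m1 : w ∈ sepSet side x z := by
    rw [mem_sep]; rw [Set.mem_setOf_eq] at hx
    intro h; exact hzb (h.symm.trans hx)
  have m2 : w ∈ sepSet side z y := by
    rw [mem_sep]; rw [Set.mem_setOf_eq] at hy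
    intro h; exact hzb (h.trans hy)
  exact Set.disjoint_left.mp hd m1 m2

include hfin hdist in
lemma inter_halfspaces_convex {ι : Sort*} (w : ι → W) (b : ι → Bool) :
    ConvexS Γ {v : V | ∀ i, side (w i) v = b i} := by
  intro x hx y hy z hz
  intro i
  exact halfspace_convex side hfin hdist (w i) (b i) x (hx i) y (hy i) z hz

variable (hconn : Γ.Connected) (hmedian : IsMedianGraph Γ)

include hconn hmedian in
lemma gate_exists {K : Set V} (hK : K.Nonempty) (hconv : ConvexS Γ K) (x : V) :
    ∃ g, g ∈ K ∧ ∀ v ∈ K, Γ.dist x g + Γ.dist g v = Γ.dist x v := by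
  set S := (fun v => Γ.dist x v) '' K with hS
  have hSne : S.Nonempty := hK.image _
  have hd : sInf S ∈ S := Nat.sInf_mem hSne
  obtain ⟨g, hgK, hgd⟩ := hd
  refine ⟨g, hgK, fun v hv => ?_⟩
  obtain ⟨m, hm, -⟩ := hmedian x g v
  obtain ⟨h1, h2, h3⟩ := hm
  have hmemK : m ∈ K := hconv g hgK v hv m h3
  have hle : sInf S ≤ Γ.dist x m := Nat.sInf_le ⟨m, hmemK, rfl⟩
  have hgd' : Γ.dist x g = sInf S := hgd
  rw [hgd'] at h1
  have hzero : Γ.dist m g = 0 := by omega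
  have hmg : m = g := (hconn.dist_eq_zero_iff).mp hzero
  rw [hmg] at h2
  exact h2

include hconn in
lemma exists_adj_closer {x y : V} (h : x ≠ y) :
    ∃ x' : V, Γ.Adj x x' ∧ Γ.dist x' y + 1 = Γ.dist x y := by
  obtain ⟨p, hp⟩ := hconn.exists_walk_length_eq_dist x y
  have hpos : 0 < Γ.dist x y := hconn.pos_dist_of_ne h
  cases p with
  | nil => exact absurd rfl h
  | @cons _ x' _ ha q =>
    refine ⟨x', ha, ?_⟩
    have hq : Γ.dist x' y ≤ q.length := SimpleGraph.dist_le q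
    have hlen : q.length + 1 = Γ.dist x y := by
      rw [← hp]; simp [SimpleGraph.Walk.length_cons]
    have htri : Γ.dist x y ≤ Γ.dist x x' + Γ.dist x' y := hconn.dist_triangle
    have hxx' : Γ.dist x x' = 1 := SimpleGraph.dist_eq_one_iff_adj.mpr ha
    omega

end Gate



/-- The halfspace of `w` far from `γ 0`. -/
def far (side : W → V → Bool) (γ : ℕ → V) (w : W) : Set V :=
  {v | side w v ≠ side w (γ 0)}

section CrossHelpers

variable (side : W → V → Bool) (γ : ℕ → V)

lemma mem_far {w : W} {v : V} : v ∈ far side γ w ↔ side w v ≠ side w (γ 0) := Iff.rfl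

lemma wallsCross_symm {u w : W} (h : WallsCross side u w) : WallsCross side w u := by
  intro b₁ b₂
  obtain ⟨v, h1, h2⟩ := h b₂ b₁
  exact ⟨v, h2, h1⟩

lemma wallsCross_irrefl (w : W) : ¬ WallsCross side w w := by
  intro h
  obtain ⟨v, h1, h2⟩ := h true false
  rw [h1] at h2; exact Bool.noConfusion h2

lemma bool_eq_of_ne_ne {a b c : Bool} (h1 : a ≠ c) (h2 : b ≠ c) : a = b := by
  cases a <;> cases b <;> cases c <;> simp_all

lemma cross_of_pts {u w : W} (p1 p2 p3 p4 : V)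
    (h1u : side u p1 = side u (γ 0)) (h1w : side w p1 = side w (γ 0))
    (h2u : side u p2 = side u (γ 0)) (h2w : side w p2 ≠ side w (γ 0))
    (h3u : side u p3 ≠ side u (γ 0)) (h3w : side w p3 = side w (γ 0))
    (h4u : side u p4 ≠ side u (γ 0)) (h4w : side w p4 ≠ side w (γ 0)) :
    WallsCross side u w := by
  intro b₁ b₂
  rcases eq_or_ne b₁ (side u (γ 0)) with hb1 | hb1 <;>
    rcases eq_or_ne b₂ (side w (γ 0)) with hb2 | hb2
  · exact ⟨p1, by rw [h1u, hb1], by rw [h1w, hb2]⟩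
  · exact ⟨p2, by rw [h2u, hb1], bool_eq_of_ne_ne h2w hb2⟩
  · exact ⟨p3, bool_eq_of_ne_ne h3u hb1, by rw [h3w, hb2]⟩
  · exact ⟨p4, bool_eq_of_ne_ne h4u hb1, bool_eq_of_ne_ne h4w hb2⟩

variable {Γ : SimpleGraph V}
variable (hfin : ∀ u v : V, (sepSet side u v).Finite)
  (hdist : ∀ u v : V, Γ.dist u v = (sepSet side u v).ncard)
  (hγ : IsGeodesicRay Γ γ)

include hfin hdist hγ in
lemma gamma_after {w : W} (h : w ∈ raysWalls side γ) {t : ℕ}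
    (ht : crossT side γ w < t) : γ t ∈ far side γ w := by
  rw [mem_far]
  rw [ray_side_after side hfin hdist hγ h ht]
  cases side w (γ 0) <;> simp

include hfin hdist hγ in
lemma far_nonempty {w : W} (h : w ∈ raysWalls side γ) :
    (far side γ w).Nonempty :=
  ⟨γ (crossT side γ w + 1), gamma_after side γ hfin hdist hγ h (Nat.lt_succ_self _)⟩

include hfin hdist hγ in
lemma cross_of_not_nested {u v : W} (hu : u ∈ raysWalls side γ) (hv : v ∈ raysWalls side γ)
    (hτ : crossT side γ u < crossT side γ v) (hnn : ¬ far side γ v ⊆ far side γ u) :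
    WallsCross side u v := by
  obtain ⟨p, hp, hpu⟩ := Set.not_subset.mp hnn
  rw [mem_far] at hp
  have hpu' : side u p = side u (γ 0) := not_not.mp hpu
  set τu := crossT side γ u
  set τv := crossT side γ v
  apply cross_of_pts side γ (γ 0) p (γ (τu + 1)) (γ (max τu τv + 1))
  · rfl
  · rfl
  · exact hpu'
  · exact hp
  · have := gamma_after side γ hfin hdist hγ hu (Nat.lt_succ_self τu)
    rw [mem_far] at this; exact this
  · exact ray_side_before side hv (by omega)
  · have := gamma_after side γ hfin hdist hγ hu
      (show τu < max τu τv + 1 by omega)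
    rw [mem_far] at this; exact this
  · have := gamma_after side γ hfin hdist hγ hv
      (show τv < max τu τv + 1 by omega)
    rw [mem_far] at this; exact this

include hfin hdist hγ in
lemma nested_of_not_cross {u v : W} (hu : u ∈ raysWalls side γ) (hv : v ∈ raysWalls side γ)
    (hτ : crossT side γ u < crossT side γ v) (hnc : ¬ WallsCross side u v) :
    far side γ v ⊆ far side γ u := by
  by_contra hnn
  exact hnc (cross_of_not_nested side γ hfin hdist hγ hu hv hτ hnn)

end CrossHelpers

section SeqRec

/-- Generic dependent-choice recursion with an invariant. -/
lemma seq_rec {α : Type*} (Inv : α → Prop) (P : α → α → Prop) (a0 : α) (h0 : Inv a0)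
    (hstep : ∀ a, Inv a → ∃ b, Inv b ∧ P a b) :
    ∃ f : ℕ → α, f 0 = a0 ∧ (∀ n, Inv (f n)) ∧ ∀ n, P (f n) (f (n + 1)) := by
  let g : ℕ → {a : α // Inv a} := fun n =>
    Nat.rec ⟨a0, h0⟩ (fun _ p => ⟨(hstep p.1 p.2).choose, (hstep p.1 p.2).choose_spec.1⟩) n
  refine ⟨fun n => (g n).1, rfl, fun n => (g n).2, fun n => ?_⟩
  exact (hstep (g n).1 (g n).2).choose_spec.2

end SeqRec

section ChainExtract

variable (side : W → V → Bool) (γ : ℕ → V) {Γ : SimpleGraph V}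
variable (hfin : ∀ u v : V, (sepSet side u v).Finite)
  (hdist : ∀ u v : V, Γ.dist u v = (sepSet side u v).ncard)
  (hγ : IsGeodesicRay Γ γ)
  (hnocross : ¬ ∃ S : Set W, S.Infinite ∧
      ∀ w₁ ∈ S, ∀ w₂ ∈ S, w₁ ≠ w₂ → WallsCross side w₁ w₂)

/-- Strict nesting order on walls crossed by `γ`. -/
def Prec (u v : W) : Prop :=
  crossT side γ u < crossT side γ v ∧ far side γ v ⊆ far side γ u

lemma prec_trans {u v w : W} (h1 : Prec side γ u v) (h2 : Prec side γ v w) :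
    Prec side γ u w :=
  ⟨h1.1.trans h2.1, h2.2.trans h1.2⟩

include hfin hdist hγ hnocross in
lemma chain_extract {S : Set W} (hS : S ⊆ raysWalls side γ) (hSinf : S.Infinite) :
    ∃ c : ℕ → W, (∀ n, c n ∈ S) ∧ ∀ n, Prec side γ (c n) (c (n + 1)) := by
  classical
  set Wγ := raysWalls side γ
  set τ := crossT side γ
  -- `up s` : elements of `S` strictly above `s`.
  set up : W → Set W := fun s => {t ∈ S | Prec side γ s t} with hup
  set T : Set W := {s ∈ S | (up s).Finite} with hT
  by_cases hTinf : T.Infinite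
  · -- build an infinite pairwise-crossing family, contradiction
    exfalso
    set InvL : List W → Prop := fun L =>
      (∀ w ∈ L, w ∈ T) ∧ L.Pairwise (fun a b => WallsCross side b a ∧ τ b < τ a) with hInvL
    have hstep : ∀ L, InvL L → ∃ L', InvL L' ∧ ∃ w, L' = w :: L := by
      intro L hL
      have hbadfin : (⋃ u ∈ L, (up u ∪ {t : W | t ∈ Wγ ∧ τ t ≤ τ u})).Finite := by
        apply Set.Finite.biUnion (L.finite_toSet)
        intro u hu
        exact ((hL.1 u hu).2).union (crossT_le_finite side hfin hdist hγ (τ u))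
      obtain ⟨w, hw⟩ := (hTinf.diff hbadfin).nonempty
      obtain ⟨hwT, hwbad⟩ := hw
      refine ⟨w :: L, ⟨?_, ?_⟩, w, rfl⟩
      · intro x hx
        rcases List.mem_cons.mp hx with h | h
        · rw [h]; exact hwT
        · exact hL.1 x h
      · rw [List.pairwise_cons]
        refine ⟨?_, hL.2⟩
        intro u hu
        have hnb : w ∉ up u ∪ {t : W | t ∈ Wγ ∧ τ t ≤ τ u} := by
          intro hmem
          exact hwbad (Set.mem_biUnion hu hmem)
        rw [Set.mem_union] at hnb
        push_neg at hnb
        have hτuw : τ u < τ w := by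
          have := hnb.2
          rw [Set.mem_setOf_eq] at this
          push_neg at this
          exact this (hS (hwT.1))
        have hnotprec : ¬ Prec side γ u w := by
          intro hp
          exact hnb.1 ⟨hwT.1, hp⟩
        have hnn : ¬ far side γ w ⊆ far side γ u := by
          intro hsub
          exact hnotprec ⟨hτuw, hsub⟩
        exact ⟨cross_of_not_nested side γ hfin hdist hγ (hS (hL.1 u hu).1)
          (hS hwT.1) hτuw hnn, hτuw⟩
    obtain ⟨f, hf0, hfInv, hfP⟩ := seq_rec InvL (fun L L' => ∃ w, L' = w :: L) [] ⟨by simp, by simp⟩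
      (fun L hL => hstep L hL)
    set q : ℕ → W := fun k => (hfP k).choose with hq
    have hcons : ∀ k, f (k + 1) = q k :: f k := fun k => (hfP k).choose_spec
    have hmemf : ∀ i k, i < k → q i ∈ f k := by
      intro i k hik
      induction k with
      | zero => omega
      | succ n ih =>
        rw [hcons n]
        rcases Nat.lt_or_ge i n with h | h
        · exact List.mem_cons_of_mem _ (ih h)
        · have : i = n := by omega
          rw [this]; exact List.mem_cons_self
    have hcrossij : ∀ i k, i < k → WallsCross side (q i) (q k) ∧ τ (q i) < τ (q k) := by
      intro i k hik
      have hpair := (hfInv (k + 1)).2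
      rw [hcons k, List.pairwise_cons] at hpair
      have := hpair.1 (q i) (hmemf i k hik)
      exact ⟨this.1, this.2⟩
    have hqinj : Function.Injective q := by
      intro i j hij
      rcases Nat.lt_trichotomy i j with h | h | h
      · exfalso; have := (hcrossij i j h).2; rw [hij] at this; exact absurd this (lt_irrefl _)
      · exact h
      · exfalso; have := (hcrossij j i h).2; rw [hij] at this; exact absurd this (lt_irrefl _)
    apply hnocross
    refine ⟨Set.range q, Set.infinite_range_of_injective hqinj, ?_⟩
    rintro w₁ ⟨i, rfl⟩ w₂ ⟨j, rfl⟩ hne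
    rcases Nat.lt_trichotomy i j with h | h | h
    · exact (hcrossij i j h).1
    · exact absurd (congrArg q h) hne
    · exact wallsCross_symm side (hcrossij j i h).1
  · -- T finite : build the chain
    rw [Set.not_infinite] at hTinf
    set S' := S \ T with hS'
    have hS'inf : S'.Infinite := hSinf.diff hTinf
    have hstep : ∀ a : W, a ∈ S' → ∃ b, b ∈ S' ∧ Prec side γ a b := by
      intro a ha
      have haT : ¬ (up a).Finite := by
        intro hfin'
        exact ha.2 ⟨ha.1, hfin'⟩
      have hupinf : (up a).Infinite := haT
      have : ((up a) \ T).Infinite := hupinf.diff hTinf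
      obtain ⟨b, hb⟩ := this.nonempty
      exact ⟨b, ⟨hb.1.1, hb.2⟩, hb.1.2⟩
    obtain ⟨a0, ha0⟩ := hS'inf.nonempty
    obtain ⟨f, hf0, hfInv, hfP⟩ := seq_rec (fun a => a ∈ S') (Prec side γ) a0 ha0
      (fun a ha => by
        obtain ⟨b, hb1, hb2⟩ := hstep a ha
        exact ⟨b, hb1, hb2⟩)
    exact ⟨f, fun n => (hfInv n).1, hfP⟩

end ChainExtract



/-- A nested chain of walls crossed by `γ`. -/
structure GChain {V W : Type*} (side : W → V → Bool) (γ : ℕ → V) where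
  c : ℕ → W
  mem : ∀ n, c n ∈ raysWalls side γ
  nested : ∀ ⦃m n : ℕ⦄, m ≤ n → far side γ (c n) ⊆ far side γ (c m)
  inj : Function.Injective c

/-- Bundled hypotheses. -/
structure Ctx {V W : Type*} (Γ : SimpleGraph V) (side : W → V → Bool) (γ : ℕ → V) : Prop where
  hconn : Γ.Connected
  hmedian : IsMedianGraph Γ
  hfin : ∀ u v : V, (sepSet side u v).Finite
  hdist : ∀ u v : V, Γ.dist u v = (sepSet side u v).ncard
  hγ : IsGeodesicRay Γ γ

section GateRay

variable {Γ : SimpleGraph V} {side : W → V → Bool} {γ : ℕ → V}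

lemma far_eq_halfspace (w : W) :
    far side γ w = {v : V | side w v = !(side w (γ 0))} := by
  ext v; rw [mem_far, Set.mem_setOf_eq, bool_ne_iff]

lemma gchain_of_seq (ctx : Ctx Γ side γ) {S : Set W} (hS : S ⊆ raysWalls side γ)
    {c : ℕ → W} (hmem : ∀ n, c n ∈ S) (hprec : ∀ n, Prec side γ (c n) (c (n + 1))) :
    ∃ g : GChain side γ, g.c = c := by
  have hmono : ∀ m n : ℕ, m < n → Prec side γ (c m) (c n) := by
    intro m n h
    induction n with
    | zero => omega
    | succ p ih =>
      rcases Nat.lt_or_ge m p with h' | h'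
      · exact prec_trans side γ (ih h') (hprec p)
      · have : m = p := by omega
        rw [this]; exact hprec p
  refine ⟨⟨c, fun n => hS (hmem n), ?_, ?_⟩, rfl⟩
  · intro m n h
    rcases Nat.eq_or_lt_of_le h with h' | h'
    · rw [h']
    · exact (hmono m n h').2
  · intro m n h
    rcases Nat.lt_trichotomy m n with h' | h' | h'
    · exfalso; have := (hmono m n h').1; rw [h] at this; exact absurd this (lt_irrefl _)
    · exact h'
    · exfalso; have := (hmono n m h').1; rw [h] at this; exact absurd this (lt_irrefl _)

lemma chi_exists (ctx : Ctx Γ side γ) (cc : GChain side γ) (n : ℕ) :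
    ∃ g, g ∈ far side γ (cc.c n) ∧
      ∀ v ∈ far side γ (cc.c n), Γ.dist (γ 0) g + Γ.dist g v = Γ.dist (γ 0) v := by
  have hconv : ConvexS Γ (far side γ (cc.c n)) := by
    rw [far_eq_halfspace]
    exact halfspace_convex side ctx.hfin ctx.hdist (cc.c n) (!(side (cc.c n) (γ 0)))
  have hne : (far side γ (cc.c n)).Nonempty :=
    far_nonempty side γ ctx.hfin ctx.hdist ctx.hγ (cc.mem n)
  obtain ⟨g, hg, hgate⟩ := gate_exists ctx.hconn ctx.hmedian hne hconv (γ 0)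
  exact ⟨g, hg, hgate⟩

/-- The gate of `γ 0` in the `n`-th halfspace of the chain. -/
noncomputable def chi (ctx : Ctx Γ side γ) (cc : GChain side γ) (n : ℕ) : V := (chi_exists ctx cc n).choose

lemma chi_mem (ctx : Ctx Γ side γ) (cc : GChain side γ) (n : ℕ) : chi ctx cc n ∈ far side γ (cc.c n) :=
  (chi_exists ctx cc n).choose_spec.1

lemma chi_gate (ctx : Ctx Γ side γ) (cc : GChain side γ) {n : ℕ} {v : V} (hv : v ∈ far side γ (cc.c n)) :
    Γ.dist (γ 0) (chi ctx cc n) + Γ.dist (chi ctx cc n) v = Γ.dist (γ 0) v :=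
  (chi_exists ctx cc n).choose_spec.2 v hv

/-- Distance from the basepoint to the `n`-th gate. -/
noncomputable def Dd (ctx : Ctx Γ side γ) (cc : GChain side γ) (n : ℕ) : ℕ := Γ.dist (γ 0) (chi ctx cc n)

lemma chi_mem_far_of_le (ctx : Ctx Γ side γ) (cc : GChain side γ) {a b : ℕ} (h : a ≤ b) : chi ctx cc b ∈ far side γ (cc.c a) :=
  cc.nested h (chi_mem ctx cc b)

lemma Dd_additive (ctx : Ctx Γ side γ) (cc : GChain side γ) {a b : ℕ} (h : a ≤ b) :
    Dd ctx cc a + Γ.dist (chi ctx cc a) (chi ctx cc b) = Dd ctx cc b :=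
  chi_gate ctx cc (chi_mem_far_of_le ctx cc h)

lemma Dd_lower (ctx : Ctx Γ side γ) (cc : GChain side γ) (n : ℕ) : n + 1 ≤ Dd ctx cc n := by
  have hsub : ↑((Finset.range (n + 1)).image cc.c) ⊆ sepSet side (γ 0) (chi ctx cc n) := by
    intro w hw
    simp only [Finset.coe_image, Finset.coe_range, Set.mem_image, Set.mem_Iio] at hw
    obtain ⟨j, hj, rfl⟩ := hw
    have := chi_mem_far_of_le ctx cc (show j ≤ n by omega)
    rw [mem_far] at this
    rw [mem_sep]
    exact fun h => this (by rw [← h])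
  have hcard : ((Finset.range (n + 1)).image cc.c).card = n + 1 := by
    rw [Finset.card_image_of_injective _ cc.inj, Finset.card_range]
  have := Set.ncard_le_ncard hsub (ctx.hfin _ _)
  rw [Set.ncard_coe_finset, hcard] at this
  rw [Dd, ctx.hdist]
  exact this

lemma chi_sep_mono (ctx : Ctx Γ side γ) (cc : GChain side γ) {a b : ℕ} (h : a ≤ b) :
    sepSet side (γ 0) (chi ctx cc a) ⊆ sepSet side (γ 0) (chi ctx cc b) :=
  sep_left_subset side ctx.hfin ctx.hdist (Dd_additive ctx cc h)

lemma chi_sep_subset_far (ctx : Ctx Γ side γ) (cc : GChain side γ) {n : ℕ} {v : V} (hv : v ∈ far side γ (cc.c n)) :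
    sepSet side (γ 0) (chi ctx cc n) ⊆ sepSet side (γ 0) v :=
  sep_left_subset side ctx.hfin ctx.hdist (chi_gate ctx cc hv)

lemma chi_sep_subset_walls (ctx : Ctx Γ side γ) (cc : GChain side γ) (n : ℕ) :
    sepSet side (γ 0) (chi ctx cc n) ⊆ raysWalls side γ := by
  intro w hw
  have hγpt : γ (crossT side γ (cc.c n) + 1) ∈ far side γ (cc.c n) :=
    gamma_after side γ ctx.hfin ctx.hdist ctx.hγ (cc.mem n) (Nat.lt_succ_self _)
  have := chi_sep_subset_far ctx cc hγpt hw
  exact ray_mem_of_sep side this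

/-- Index of the first gate strictly beyond distance `t`. -/
lemma Nt_ex (ctx : Ctx Γ side γ) (cc : GChain side γ) (t : ℕ) : ∃ n, t < Dd ctx cc n :=
  ⟨t, by have := Dd_lower ctx cc t; omega⟩

noncomputable def Nt (ctx : Ctx Γ side γ) (cc : GChain side γ) (t : ℕ) : ℕ :=
  Nat.find (Nt_ex ctx cc t)

lemma Nt_lt (ctx : Ctx Γ side γ) (cc : GChain side γ) (t : ℕ) :
    t < Dd ctx cc (Nt ctx cc t) := Nat.find_spec (Nt_ex ctx cc t)

lemma Nt_min (ctx : Ctx Γ side γ) (cc : GChain side γ) {t m : ℕ} (h : m < Nt ctx cc t) :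
    Dd ctx cc m ≤ t := by
  have := Nat.find_min (Nt_ex ctx cc t) h
  omega

/-- The gate ray. -/
noncomputable def delta (ctx : Ctx Γ side γ) (cc : GChain side γ) : ℕ → V := fun t =>
  Nat.rec (γ 0) (fun t x =>
    if h : x ≠ chi ctx cc (Nt ctx cc t) then (exists_adj_closer ctx.hconn h).choose else x) t

lemma delta_zero (ctx : Ctx Γ side γ) (cc : GChain side γ) : delta ctx cc 0 = γ 0 := rfl

lemma delta_succ (ctx : Ctx Γ side γ) (cc : GChain side γ) (t : ℕ) : delta ctx cc (t + 1) =
    if h : delta ctx cc t ≠ chi ctx cc (Nt ctx cc t) then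
      (exists_adj_closer ctx.hconn h).choose else delta ctx cc t := rfl

lemma delta_inv (ctx : Ctx Γ side γ) (cc : GChain side γ) : ∀ t : ℕ, Γ.dist (γ 0) (delta ctx cc t) = t ∧
    ∀ n, t ≤ Dd ctx cc n → Γ.dist (delta ctx cc t) (chi ctx cc n) + t = Dd ctx cc n := by
  intro t
  induction t with
  | zero =>
    refine ⟨SimpleGraph.dist_self, fun n _ => ?_⟩
    rw [delta_zero, Nat.add_zero]; rfl
  | succ t ih =>
    obtain ⟨h1, h2⟩ := ih
    set n₀ := Nt ctx cc t with hn₀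
    have htlt : t < Dd ctx cc n₀ := Nt_lt ctx cc t
    have hd0 : Γ.dist (delta ctx cc t) (chi ctx cc n₀) + t = Dd ctx cc n₀ :=
      h2 n₀ (le_of_lt htlt)
    have hne : delta ctx cc t ≠ chi ctx cc n₀ := by
      intro h
      rw [h, SimpleGraph.dist_self] at hd0
      omega
    have hδ : delta ctx cc (t + 1) = (exists_adj_closer ctx.hconn hne).choose := by
      rw [delta_succ, dif_pos hne]
    obtain ⟨hadj, hdd⟩ := (exists_adj_closer ctx.hconn hne).choose_spec
    rw [← hδ] at hadj hdd
    have hadjd : Γ.dist (delta ctx cc t) (delta ctx cc (t + 1)) = 1 :=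
      SimpleGraph.dist_eq_one_iff_adj.mpr hadj
    have hup : Γ.dist (γ 0) (delta ctx cc (t + 1)) ≤ t + 1 := by
      have := ctx.hconn.dist_triangle (u := γ 0) (v := delta ctx cc t)
        (w := delta ctx cc (t + 1))
      omega
    have hlow : Dd ctx cc n₀ ≤ Γ.dist (γ 0) (delta ctx cc (t + 1)) +
        Γ.dist (delta ctx cc (t + 1)) (chi ctx cc n₀) := by
      have := ctx.hconn.dist_triangle (u := γ 0) (v := delta ctx cc (t + 1))
        (w := chi ctx cc n₀)
      rw [Dd]
      omega
    have h1' : Γ.dist (γ 0) (delta ctx cc (t + 1)) = t + 1 := by omega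
    refine ⟨h1', fun n hn => ?_⟩
    have hn₀n : n₀ ≤ n := by
      by_contra h
      push_neg at h
      have := Nt_min ctx cc h
      omega
    have hchain : Dd ctx cc n₀ + Γ.dist (chi ctx cc n₀) (chi ctx cc n) = Dd ctx cc n :=
      Dd_additive ctx cc hn₀n
    have hup2 : Γ.dist (delta ctx cc (t + 1)) (chi ctx cc n) ≤
        Γ.dist (delta ctx cc (t + 1)) (chi ctx cc n₀) + Γ.dist (chi ctx cc n₀) (chi ctx cc n) :=
      ctx.hconn.dist_triangle
    have hlow2 : Dd ctx cc n ≤ Γ.dist (γ 0) (delta ctx cc (t + 1)) +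
        Γ.dist (delta ctx cc (t + 1)) (chi ctx cc n) := by
      have := ctx.hconn.dist_triangle (u := γ 0) (v := delta ctx cc (t + 1))
        (w := chi ctx cc n)
      rw [Dd]
      omega
    omega

lemma delta_adj (ctx : Ctx Γ side γ) (cc : GChain side γ) (t : ℕ) : Γ.Adj (delta ctx cc t) (delta ctx cc (t + 1)) := by
  obtain ⟨h1, h2⟩ := delta_inv ctx cc t
  set n₀ := Nt ctx cc t with hn₀
  have htlt : t < Dd ctx cc n₀ := Nt_lt ctx cc t
  have hd0 := h2 n₀ (le_of_lt htlt)
  have hne : delta ctx cc t ≠ chi ctx cc n₀ := by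
    intro h
    rw [h, SimpleGraph.dist_self] at hd0
    omega
  have hδ : delta ctx cc (t + 1) = (exists_adj_closer ctx.hconn hne).choose := by
    rw [delta_succ, dif_pos hne]
  rw [hδ]
  exact (exists_adj_closer ctx.hconn hne).choose_spec.1

lemma delta_ray (ctx : Ctx Γ side γ) (cc : GChain side γ) : IsGeodesicRay Γ (delta ctx cc) := by
  constructor
  · exact delta_adj ctx cc
  · intro s t hst
    have hup : ∀ u : ℕ, Γ.dist (delta ctx cc s) (delta ctx cc (s + u)) ≤ u := by
      intro u
      induction u with
      | zero => simp [SimpleGraph.dist_self]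
      | succ v ih =>
        have htri := ctx.hconn.dist_triangle (u := delta ctx cc s)
          (v := delta ctx cc (s + v)) (w := delta ctx cc (s + v + 1))
        have hadj : Γ.dist (delta ctx cc (s + v)) (delta ctx cc (s + v + 1)) = 1 :=
          SimpleGraph.dist_eq_one_iff_adj.mpr (delta_adj ctx cc (s + v))
        have : s + (v + 1) = s + v + 1 := by omega
        rw [this]
        omega
    have h1 := (delta_inv ctx cc s).1
    have h2 := (delta_inv ctx cc t).1
    have hlow := ctx.hconn.dist_triangle (u := γ 0) (v := delta ctx cc s)
      (w := delta ctx cc t)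
    have := hup (t - s)
    rw [show s + (t - s) = t by omega] at this
    omega

lemma delta_hits (ctx : Ctx Γ side γ) (cc : GChain side γ) (n : ℕ) : delta ctx cc (Dd ctx cc n) = chi ctx cc n := by
  have := (delta_inv ctx cc (Dd ctx cc n)).2 n le_rfl
  have h0 : Γ.dist (delta ctx cc (Dd ctx cc n)) (chi ctx cc n) = 0 := by omega
  exact (ctx.hconn.dist_eq_zero_iff).mp h0

lemma delta_sep_sub (ctx : Ctx Γ side γ) (cc : GChain side γ) {t n : ℕ} (h : t ≤ Dd ctx cc n) :
    sepSet side (γ 0) (delta ctx cc t) ⊆ sepSet side (γ 0) (chi ctx cc n) := by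
  apply sep_left_subset side ctx.hfin ctx.hdist
  have h1 := (delta_inv ctx cc t).1
  have h2 := (delta_inv ctx cc t).2 n h
  rw [h1]
  show t + _ = Γ.dist (γ 0) (chi ctx cc n)
  rw [show Γ.dist (γ 0) (chi ctx cc n) = Dd ctx cc n from rfl]
  omega

lemma delta_walls_eq (ctx : Ctx Γ side γ) (cc : GChain side γ) :
    raysWalls side (delta ctx cc) = ⋃ n, sepSet side (γ 0) (chi ctx cc n) := by
  apply Set.Subset.antisymm
  · rintro w ⟨t, ht⟩
    have hmem : w ∈ sepSet side (γ 0) (delta ctx cc t) ∪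
        sepSet side (γ 0) (delta ctx cc (t + 1)) := by
      by_cases h : side w (delta ctx cc t) = side w (γ 0)
      · right; rw [mem_sep]; intro h2; exact ht (h.trans h2)
      · left; rw [mem_sep]; intro h2; exact h h2.symm
    have hD : t + 1 ≤ Dd ctx cc (t + 1) := by
      have := Dd_lower ctx cc (t + 1); omega
    rcases hmem with h | h
    · exact Set.mem_iUnion.mpr ⟨t + 1, delta_sep_sub ctx cc (by omega) h⟩
    · exact Set.mem_iUnion.mpr ⟨t + 1, delta_sep_sub ctx cc hD h⟩
  · intro w hw
    obtain ⟨n, hn⟩ := Set.mem_iUnion.mp hw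
    have : sepSet side (γ 0) (chi ctx cc n) =
        sepSet side (delta ctx cc 0) (delta ctx cc (Dd ctx cc n)) := by
      rw [delta_zero, delta_hits]
    rw [this] at hn
    exact ray_mem_of_sep side hn

lemma delta_walls_sub (ctx : Ctx Γ side γ) (cc : GChain side γ) : raysWalls side (delta ctx cc) ⊆ raysWalls side γ := by
  rw [delta_walls_eq]
  intro w hw
  obtain ⟨n, hn⟩ := Set.mem_iUnion.mp hw
  exact chi_sep_subset_walls ctx cc n hn

/-- The least gate index separating `w` from the basepoint. -/
noncomputable def mIdx (ctx : Ctx Γ side γ) (cc : GChain side γ) (w : W) : ℕ :=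
  if h : ∃ n, w ∈ sepSet side (γ 0) (chi ctx cc n) then Nat.find h else 0

lemma mIdx_spec (ctx : Ctx Γ side γ) (cc : GChain side γ) {w : W} (hw : w ∈ raysWalls side (delta ctx cc)) :
    w ∈ sepSet side (γ 0) (chi ctx cc (mIdx ctx cc w)) := by
  rw [delta_walls_eq] at hw
  have hex : ∃ n, w ∈ sepSet side (γ 0) (chi ctx cc n) := Set.mem_iUnion.mp hw
  have heq : mIdx ctx cc w = Nat.find hex := by rw [mIdx, dif_pos hex]
  rw [heq]
  exact Nat.find_spec hex

lemma mIdx_min (ctx : Ctx Γ side γ) (cc : GChain side γ) {w : W} (hw : w ∈ raysWalls side (delta ctx cc)) {j : ℕ}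
    (hj : j < mIdx ctx cc w) : w ∉ sepSet side (γ 0) (chi ctx cc j) := by
  rw [delta_walls_eq] at hw
  have hex : ∃ n, w ∈ sepSet side (γ 0) (chi ctx cc n) := Set.mem_iUnion.mp hw
  have heq : mIdx ctx cc w = Nat.find hex := by rw [mIdx, dif_pos hex]
  rw [heq] at hj
  exact Nat.find_min hex hj

lemma mIdx_le_finite (ctx : Ctx Γ side γ) (cc : GChain side γ) (M : ℕ) :
    {w : W | w ∈ raysWalls side (delta ctx cc) ∧ mIdx ctx cc w ≤ M}.Finite := by
  apply (ctx.hfin (γ 0) (chi ctx cc M)).subset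
  rintro w ⟨hw, hle⟩
  exact chi_sep_mono ctx cc hle (mIdx_spec ctx cc hw)

lemma mIdx_deep (ctx : Ctx Γ side γ) (cc : GChain side γ) {w : W} (hw : w ∈ raysWalls side (delta ctx cc)) :
    far side γ (cc.c (mIdx ctx cc w)) ⊆ far side γ w := by
  intro v hv
  have := chi_sep_subset_far ctx cc hv (mIdx_spec ctx cc hw)
  rw [mem_sep] at this
  rw [mem_far]
  exact fun h => this (by rw [h])

end GateRay



section Termination

variable {Γ : SimpleGraph V} {side : W → V → Bool} {γ : ℕ → V}

/-- Failure of a chain: some level admits infinitely many diagonal witnesses. -/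
def Fail (cc : GChain side γ) : Prop :=
  ∃ l : ℕ, {v : W | v ∈ raysWalls side γ ∧ ∃ m : ℕ, l + 2 ≤ m ∧
    far side γ (cc.c m) ⊆ far side γ v ∧
    ∀ j, l ≤ j → j + 2 ≤ m → WallsCross side v (cc.c j)}.Infinite

lemma fail_of_diamond (ctx : Ctx Γ side γ) (cc : GChain side γ) {l : ℕ}
    (hinf : {v : W | v ∈ raysWalls side (delta ctx cc) ∧
      ¬ far side γ v ⊆ far side γ (cc.c l)}.Infinite) : Fail cc := by
  refine ⟨l, ?_⟩
  have hinf2 : ({v : W | v ∈ raysWalls side (delta ctx cc) ∧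
      ¬ far side γ v ⊆ far side γ (cc.c l)} \ {w : W | w ∈ raysWalls side (delta ctx cc) ∧ mIdx ctx cc w ≤ l + 1}).Infinite :=
    hinf.diff (mIdx_le_finite ctx cc (l + 1))
  apply hinf2.mono
  rintro v ⟨⟨hvδ, hnsub⟩, hnsmall⟩
  have hm : l + 2 ≤ mIdx ctx cc v := by
    by_contra h
    exact hnsmall ⟨hvδ, by omega⟩
  set m := mIdx ctx cc v with hmdef
  refine ⟨delta_walls_sub ctx cc hvδ, m, hm, mIdx_deep ctx cc hvδ, ?_⟩
  intro j hjl hjm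
  obtain ⟨p, hp, hpl⟩ := Set.not_subset.mp hnsub
  rw [mem_far] at hp
  have hpj : side (cc.c j) p = side (cc.c j) (γ 0) := by
    have : p ∉ far side γ (cc.c j) := fun hin => hpl (cc.nested hjl hin)
    rw [mem_far] at this
    exact not_not.mp this
  have hsm1 : side v (chi ctx cc (m - 1)) = side v (γ 0) := by
    have hnot := mIdx_min ctx cc hvδ (show m - 1 < m by omega)
    rw [mem_sep] at hnot
    exact (not_not.mp hnot).symm
  have hwm1 : side (cc.c j) (chi ctx cc (m - 1)) ≠ side (cc.c j) (γ 0) := by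
    have : chi ctx cc (m - 1) ∈ far side γ (cc.c j) :=
      cc.nested (show j ≤ m - 1 by omega) (chi_mem ctx cc (m - 1))
    rwa [mem_far] at this
  have hsm : side v (chi ctx cc m) ≠ side v (γ 0) := by
    have := mIdx_spec ctx cc hvδ
    rw [mem_sep] at this
    exact Ne.symm this
  have hwm : side (cc.c j) (chi ctx cc m) ≠ side (cc.c j) (γ 0) := by
    have : chi ctx cc m ∈ far side γ (cc.c j) :=
      cc.nested (show j ≤ m by omega) (chi_mem ctx cc m)
    rwa [mem_far] at this
  exact cross_of_pts side γ (γ 0) (chi ctx cc (m - 1)) p (chi ctx cc m)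
    rfl rfl hsm1 hwm1 hp hpj hsm hwm

/-- The linking data between consecutive chains in the improvement process. -/
def ChLink (cc cc' : GChain side γ) (l : ℕ) : Prop :=
  ∀ i : ℕ, ∃ m : ℕ, l + 2 ≤ m ∧ far side γ (cc.c m) ⊆ far side γ (cc'.c i) ∧
    ∀ j, l ≤ j → j + 2 ≤ m → WallsCross side (cc'.c i) (cc.c j)

lemma step_of_fail (ctx : Ctx Γ side γ)
    (hnocross : ¬ ∃ S : Set W, S.Infinite ∧
      ∀ w₁ ∈ S, ∀ w₂ ∈ S, w₁ ≠ w₂ → WallsCross side w₁ w₂)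
    (cc : GChain side γ) (hf : Fail cc) :
    ∃ (cc' : GChain side γ) (l : ℕ), ChLink cc cc' l := by
  obtain ⟨l, hinf⟩ := hf
  have hS : {v : W | v ∈ raysWalls side γ ∧ ∃ m : ℕ, l + 2 ≤ m ∧
      far side γ (cc.c m) ⊆ far side γ v ∧
      ∀ j, l ≤ j → j + 2 ≤ m → WallsCross side v (cc.c j)} ⊆ raysWalls side γ :=
    fun v hv => hv.1
  obtain ⟨c, hmem, hprec⟩ := chain_extract side γ ctx.hfin ctx.hdist ctx.hγ hnocross hS hinf
  obtain ⟨cc', hcc'⟩ := gchain_of_seq ctx hS hmem hprec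
  refine ⟨cc', l, fun i => ?_⟩
  have := hmem i
  rw [← hcc'] at this
  obtain ⟨-, m, hm1, hm2, hm3⟩ := this
  exact ⟨m, hm1, hm2, hm3⟩

lemma index_sep_finite (ctx : Ctx Γ side γ) (cc' : GChain side γ) (p : V) :
    {i : ℕ | cc'.c i ∈ sepSet side (γ 0) p}.Finite :=
  Set.Finite.preimage cc'.inj.injOn (ctx.hfin (γ 0) p)

theorem exists_good_chain (ctx : Ctx Γ side γ)
    (hnocross : ¬ ∃ S : Set W, S.Infinite ∧
      ∀ w₁ ∈ S, ∀ w₂ ∈ S, w₁ ≠ w₂ → WallsCross side w₁ w₂) :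
    ∃ cc : GChain side γ, ¬ Fail cc := by
  by_contra hcon
  push_neg at hcon
  -- initial chain
  have hWγinf : (raysWalls side γ).Infinite :=
    ray_walls_infinite side ctx.hfin ctx.hdist ctx.hγ
  obtain ⟨c0, hmem0, hprec0⟩ := chain_extract side γ ctx.hfin ctx.hdist ctx.hγ hnocross
    (Set.Subset.refl _) hWγinf
  obtain ⟨cc0, -⟩ := gchain_of_seq ctx (Set.Subset.refl _) hmem0 hprec0
  -- the sequence of improving chains
  obtain ⟨st, -, -, hstP⟩ := seq_rec (fun _ : GChain side γ => True)
    (fun cc cc' => ∃ l, ChLink cc cc' l) cc0 trivial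
    (fun cc _ => by
      obtain ⟨cc', l, h⟩ := step_of_fail ctx hnocross cc (hcon cc)
      exact ⟨cc', trivial, l, h⟩)
  set lk : ℕ → ℕ := fun k => (hstP k).choose with hlk
  have hlink : ∀ k, ChLink (st k) (st (k + 1)) (lk k) := fun k => (hstP k).choose_spec
  set μ : ℕ → ℕ → ℕ := fun k i => (hlink k i).choose with hμdef
  have hμ : ∀ k i, lk k + 2 ≤ μ k i ∧
      far side γ ((st k).c (μ k i)) ⊆ far side γ ((st (k + 1)).c i) ∧
      ∀ j, lk k ≤ j → j + 2 ≤ μ k i → WallsCross side ((st (k + 1)).c i) ((st k).c j) :=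
    fun k i => (hlink k i).choose_spec
  -- the key cofiniteness induction
  have hLpp : ∀ k n, lk k ≤ n → ∀ j, k < j →
      {i : ℕ | ¬ WallsCross side ((st j).c i) ((st k).c n)}.Finite := by
    intro k n hn j hj
    induction j, hj using Nat.le_induction with
    | base =>
      -- j = k + 1
      set pt := γ (crossT side γ ((st k).c (n + 1)) + 1) with hpt
      have hptfar : pt ∈ far side γ ((st k).c (n + 1)) :=
        gamma_after side γ ctx.hfin ctx.hdist ctx.hγ ((st k).mem (n + 1)) (Nat.lt_succ_self _)
      apply (index_sep_finite ctx (st (k + 1)) pt).subset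
      intro i hi
      rw [Set.mem_setOf_eq] at hi
      by_contra hnotmem
      apply hi
      -- i is not in the exceptional set, so μ k i ≥ n + 2
      have hμi : n + 2 ≤ μ k i := by
        by_contra hle
        push_neg at hle
        have hfar : far side γ ((st k).c (n + 1)) ⊆ far side γ ((st (k + 1)).c i) :=
          Set.Subset.trans ((st k).nested (show μ k i ≤ n + 1 by omega)) (hμ k i).2.1
        have : pt ∈ far side γ ((st (k + 1)).c i) := hfar hptfar
        rw [mem_far] at this
        exact hnotmem (Ne.symm this)
      exact (hμ k i).2.2 n hn hμi
    | succ j hj ih =>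
      -- bound for exceptional indices at stage j
      obtain ⟨N, hN⟩ := ih.bddAbove
      set T := (st k).c n with hT
      set pt1 := γ (crossT side γ ((st j).c (N + 1)) + 1) with hpt1
      have hpt1far : pt1 ∈ far side γ ((st j).c (N + 1)) :=
        gamma_after side γ ctx.hfin ctx.hdist ctx.hγ ((st j).mem (N + 1)) (Nat.lt_succ_self _)
      set pt2 := γ (crossT side γ T + 1) with hpt2
      apply Set.Finite.subset ((index_sep_finite ctx (st (j + 1)) pt1).union
        (index_sep_finite ctx (st (j + 1)) pt2))
      intro i hi
      rw [Set.mem_setOf_eq] at hi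
      by_contra hnotmem
      apply hi
      rw [Set.mem_union] at hnotmem
      push_neg at hnotmem
      obtain ⟨hnot1, hnot2⟩ := hnotmem
      set u := (st (j + 1)).c i with hu
      have huγ : u ∈ raysWalls side γ := (st (j + 1)).mem i
      -- from ¬E1 : μ j i ≥ N + 2
      have hμi : N + 2 ≤ μ j i := by
        by_contra hle
        push_neg at hle
        have hfar : far side γ ((st j).c (N + 1)) ⊆ far side γ u :=
          Set.Subset.trans ((st j).nested (show μ j i ≤ N + 1 by omega)) (hμ j i).2.1
        have : pt1 ∈ far side γ u := hfar hpt1far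
        rw [mem_far] at this
        exact hnot1 (Ne.symm this)
      -- the wall (st j).c (μ j i) crosses T
      have hcrossμ : WallsCross side ((st j).c (μ j i)) T := by
        by_contra hnc
        have : μ j i ∈ {i : ℕ | ¬ WallsCross side ((st j).c i) ((st k).c n)} := hnc
        have := hN this
        omega
      -- from ¬E2 : T is crossed by γ before u
      have hτ : crossT side γ T < crossT side γ u := by
        by_contra hle
        push_neg at hle
        have : u ∈ sepSet side (γ 0) pt2 := by
          rw [hpt2]
          exact (ray_mem_sep0_iff side ctx.hfin ctx.hdist ctx.hγ huγ).mpr (by omega)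
        exact hnot2 this
      -- four quarter points
      have hTγ : T ∈ raysWalls side γ := (st k).mem n
      -- P2 : (near u, far T)
      have h2u : side u (γ (crossT side γ T + 1)) = side u (γ 0) :=
        ray_side_before side huγ (by omega)
      have h2w : side T (γ (crossT side γ T + 1)) ≠ side T (γ 0) := by
        have := gamma_after side γ ctx.hfin ctx.hdist ctx.hγ hTγ (Nat.lt_succ_self _)
        rwa [mem_far] at this
      -- P3 : (far u, near T)
      obtain ⟨q, hq1, hq2⟩ := hcrossμ (!(side ((st j).c (μ j i)) (γ 0))) (side T (γ 0))
      have h3u : side u q ≠ side u (γ 0) := by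
        have hqfar : q ∈ far side γ ((st j).c (μ j i)) := by
          rw [mem_far, hq1]
          cases side ((st j).c (μ j i)) (γ 0) <;> simp
        have := (hμ j i).2.1 hqfar
        rwa [mem_far] at this
      -- P4 : (far u, far T)
      set t4 := max (crossT side γ u) (crossT side γ T) + 1 with ht4
      have h4u : side u (γ t4) ≠ side u (γ 0) := by
        have := gamma_after side γ ctx.hfin ctx.hdist ctx.hγ huγ
          (show crossT side γ u < t4 by omega)
        rwa [mem_far] at this
      have h4w : side T (γ t4) ≠ side T (γ 0) := by
        have := gamma_after side γ ctx.hfin ctx.hdist ctx.hγ hTγ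
          (show crossT side γ T < t4 by omega)
        rwa [mem_far] at this
      exact cross_of_pts side γ (γ 0) (γ (crossT side γ T + 1)) q (γ t4)
        rfl rfl h2u h2w h3u hq2 h4u h4w
  -- now build an infinite pairwise-crossing family
  set InvL : ℕ × List W → Prop := fun s =>
    (∀ u ∈ s.2, ∃ i n, i < s.1 ∧ lk i ≤ n ∧ u = (st i).c n) ∧
      s.2.Pairwise (WallsCross side) with hInvL
  have hstep : ∀ s : ℕ × List W, InvL s →
      ∃ s', InvL s' ∧ (s'.1 = s.1 + 1 ∧ ∃ w, s'.2 = w :: s.2) := by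
    rintro ⟨k, L⟩ ⟨hL1, hL2⟩
    have hbadfin : (⋃ u ∈ L, {n : ℕ | ¬ WallsCross side ((st k).c n) u}).Finite := by
      apply Set.Finite.biUnion L.finite_toSet
      intro u hu
      obtain ⟨i, n, hik, hn, rfl⟩ := hL1 u hu
      exact hLpp i n hn k hik
    obtain ⟨N, hN⟩ := hbadfin.bddAbove
    set n' := max (lk k) (N + 1) with hn'
    have hn'good : ∀ u ∈ L, WallsCross side ((st k).c n') u := by
      intro u hu
      by_contra hnc
      have : n' ∈ ⋃ u ∈ L, {n : ℕ | ¬ WallsCross side ((st k).c n) u} :=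
        Set.mem_biUnion hu hnc
      have := hN this
      omega
    refine ⟨⟨k + 1, (st k).c n' :: L⟩, ⟨?_, ?_⟩, rfl, (st k).c n', rfl⟩
    · rintro u hu
      rcases List.mem_cons.mp hu with h | h
      · exact ⟨k, n', by omega, le_max_left _ _, h⟩
      · obtain ⟨i, n, hik, hn, rfl⟩ := hL1 u h
        exact ⟨i, n, by omega, hn, rfl⟩
    · rw [List.pairwise_cons]
      exact ⟨hn'good, hL2⟩
  obtain ⟨f, hf0, hfInv, hfP⟩ := seq_rec InvL
    (fun s s' => s'.1 = s.1 + 1 ∧ ∃ w, s'.2 = w :: s.2) (0, [])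
    ⟨by simp, by simp⟩ hstep
  set q : ℕ → W := fun k => ((hfP k).2).choose with hq
  have hcons : ∀ k, (f (k + 1)).2 = q k :: (f k).2 := fun k => ((hfP k).2).choose_spec
  have hmemf : ∀ i k, i < k → q i ∈ (f k).2 := by
    intro i k hik
    induction k with
    | zero => omega
    | succ p ih =>
      rw [hcons p]
      rcases Nat.lt_or_ge i p with h | h
      · exact List.mem_cons_of_mem _ (ih h)
      · have : i = p := by omega
        rw [this]; exact List.mem_cons_self
  have hcrossij : ∀ i k, i < k → WallsCross side (q k) (q i) := by
    intro i k hik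
    have hpair := (hfInv (k + 1)).2
    rw [hcons k, List.pairwise_cons] at hpair
    exact hpair.1 (q i) (hmemf i k hik)
  have hqinj : Function.Injective q := by
    intro i j hij
    rcases Nat.lt_trichotomy i j with h | h | h
    · exfalso
      have := hcrossij i j h
      rw [hij] at this
      exact wallsCross_irrefl side (q j) this
    · exact h
    · exfalso
      have := hcrossij j i h
      rw [hij] at this
      exact wallsCross_irrefl side (q j) this
  apply hnocross
  refine ⟨Set.range q, Set.infinite_range_of_injective hqinj, ?_⟩
  rintro w₁ ⟨i, rfl⟩ w₂ ⟨j, rfl⟩ hne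
  rcases Nat.lt_trichotomy i j with h | h | h
  · exact wallsCross_symm side (hcrossij i j h)
  · exact absurd (congrArg q h) hne
  · exact hcrossij j i h

end Termination



section Final

variable {Γ : SimpleGraph V} {side : W → V → Bool} {γ : ℕ → V}

lemma good_chain_minimal (ctx : Ctx Γ side γ) (cc : GChain side γ) (hNF : ¬ Fail cc)
    (β : ℕ → V) (hβ : IsGeodesicRay Γ β)
    (hβfin : (raysWalls side β \ raysWalls side (delta ctx cc)).Finite) :
    (raysWalls side (delta ctx cc) \ raysWalls side β).Finite := by
  -- each exceptional set is finite
  have hE : ∀ l : ℕ, {v : W | v ∈ raysWalls side (delta ctx cc) ∧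
      ¬ far side γ v ⊆ far side γ (cc.c l)}.Finite := by
    intro l
    by_contra h
    exact hNF (fail_of_diamond ctx cc h)
  -- β enters every far halfspace of the chain
  have henters : ∀ l : ℕ, ∃ t, β t ∈ far side γ (cc.c l) := by
    intro l
    have hβinf : (raysWalls side β).Infinite :=
      ray_walls_infinite side ctx.hfin ctx.hdist hβ
    have hint : (((raysWalls side β) \
        (raysWalls side β \ raysWalls side (delta ctx cc))) \
        {v : W | v ∈ raysWalls side (delta ctx cc) ∧
          ¬ far side γ v ⊆ far side γ (cc.c l)}).Infinite :=
      (hβinf.diff hβfin).diff (hE l)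
    obtain ⟨v, hv⟩ := hint.nonempty
    have hvβ : v ∈ raysWalls side β := hv.1.1
    have hvδ : v ∈ raysWalls side (delta ctx cc) := by
      by_contra h
      exact hv.1.2 ⟨hv.1.1, h⟩
    have hsub : far side γ v ⊆ far side γ (cc.c l) := by
      by_contra h
      exact hv.2 ⟨hvδ, h⟩
    obtain ⟨t, ht⟩ := hvβ
    by_cases h : side v (β t) = side v (γ 0)
    · refine ⟨t + 1, hsub ?_⟩
      rw [mem_far]
      intro h2
      exact ht (h.trans h2.symm)
    · exact ⟨t, hsub (by rw [mem_far]; exact h)⟩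
  -- conclude
  apply (ctx.hfin (γ 0) (β 0)).subset
  rintro w ⟨hwδ, hwβ⟩
  rw [mem_sep]
  by_contra heqn
  have heq : side w (γ 0) = side w (β 0) := heqn
  obtain ⟨t, ht⟩ := henters (mIdx ctx cc w)
  have hfar : β t ∈ far side γ w := mIdx_deep ctx cc hwδ ht
  rw [mem_far] at hfar
  apply hwβ
  apply ray_mem_of_sep side (s := 0) (t := t)
  intro h
  exact hfar (h.symm.trans heq.symm)

end Final

end MinRay

/-- let `X` be a locally finite CAT(0) cube complex (modeled by
its median 1-skeleton with hyperplane structure) with no infinite family of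
pairwise-crossing hyperplanes, and let `γ` be a combinatorial geodesic ray.
Then there is a combinatorial geodesic ray `γ₀` with `γ₀(0) = γ(0)` and
`W(γ₀) ⊆ W(γ)` whose class is minimal: any geodesic ray `β` with
`W(β) \ W(γ₀)` finite also has `W(γ₀) \ W(β)` finite. -/
theorem minimal_ray_below_exists {V W : Type*} (Γ : SimpleGraph V)
    (hconn : Γ.Connected) (hlf : ∀ v : V, (Γ.neighborSet v).Finite)
    (hmedian : IsMedianGraph Γ)
    (side : W → V → Bool)
    (hfin : ∀ u v : V, (sepSet side u v).Finite)
    (hdist : ∀ u v : V, Γ.dist u v = (sepSet side u v).ncard)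
    (hnocross : ¬ ∃ S : Set W, S.Infinite ∧
      ∀ w₁ ∈ S, ∀ w₂ ∈ S, w₁ ≠ w₂ → WallsCross side w₁ w₂)
    (γ : ℕ → V) (hγ : IsGeodesicRay Γ γ) :
    ∃ γ₀ : ℕ → V, IsGeodesicRay Γ γ₀ ∧ γ₀ 0 = γ 0 ∧
      raysWalls side γ₀ ⊆ raysWalls side γ ∧
      ∀ β : ℕ → V, IsGeodesicRay Γ β →
        (raysWalls side β \ raysWalls side γ₀).Finite →
        (raysWalls side γ₀ \ raysWalls side β).Finite := by
  have ctx : MinRay.Ctx Γ side γ := ⟨hconn, hmedian, hfin, hdist, hγ⟩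
  obtain ⟨cc, hNF⟩ := MinRay.exists_good_chain ctx hnocross
  refine ⟨MinRay.delta ctx cc, MinRay.delta_ray ctx cc, MinRay.delta_zero ctx cc,
    MinRay.delta_walls_sub ctx cc, ?_⟩
  intro β hβ hfin'
  exact MinRay.good_chain_minimal ctx cc hNF β hβ hfin'
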